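/- Let 𝒩 be a set of positive integers ν such that (i) every ν ∈ 𝒩 is squarefree, and (ii) for every ν ∈ 𝒩 and every prime divisor p of ν, p − 1 divides ν. Then 𝒩 ⊆ {1, 2, 6, 42, 1806}. -/

import Mathlib

set_option maxRecDepth 10000

/-- A squarefree number whose prime factors all lie in `{2,3,7,43}` divides `1806`. -/
lemma aux_dvd1806 (n : ℕ) (hn : n ≠ 0) (hsf : Squarefree n)
    (hp : ∀ p, Nat.Prime p → p ∣ n → p = 2 ∨ p = 3 ∨ p = 7 ∨ p = 43) : n ∣ 1806 := by
  rw [← Nat.factorization_le_iff_dvd hn (by norm_num)]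
  intro q
  by_cases hq : Nat.Prime q
  · by_cases hqn : q ∣ n
    · have h1 : n.factorization q ≤ 1 :=
        (Nat.squarefree_iff_factorization_le_one hn).mp hsf q
      have h2 : 1 ≤ (1806 : ℕ).factorization q := by
        have hq1806 : q ∣ 1806 := by
          rcases hp q hq hqn with h | h | h | h <;> subst h <;> norm_num
        exact (hq.factorization_pos_of_dvd (by norm_num) hq1806)
      omega
    · simp [Nat.factorization_eq_zero_of_not_dvd hqn]
  · simp [Nat.factorization_eq_zero_of_not_prime _ hq]

lemma aux_div1806 (n : ℕ) (h : n ∣ 1806) :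
    n = 1 ∨ n = 2 ∨ n = 3 ∨ n = 6 ∨ n = 7 ∨ n = 14 ∨ n = 21 ∨ n = 42 ∨ n = 43 ∨
    n = 86 ∨ n = 129 ∨ n = 258 ∨ n = 301 ∨ n = 602 ∨ n = 903 ∨ n = 1806 := by
  have h' : n ∣ 2 * (3 * (7 * 43)) := by norm_num at h ⊢; exact h
  obtain ⟨a, s, ha, hs, rfl⟩ := exists_dvd_and_dvd_of_dvd_mul h'
  obtain ⟨b, t, hb, ht, rfl⟩ := exists_dvd_and_dvd_of_dvd_mul hs
  obtain ⟨c, d, hc, hd, rfl⟩ := exists_dvd_and_dvd_of_dvd_mul ht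
  have ha' := (Nat.prime_two.eq_one_or_self_of_dvd a ha)
  have hb' := ((by norm_num : Nat.Prime 3).eq_one_or_self_of_dvd b hb)
  have hc' := ((by norm_num : Nat.Prime 7).eq_one_or_self_of_dvd c hc)
  have hd' := ((by norm_num : Nat.Prime 43).eq_one_or_self_of_dvd d hd)
  rcases ha' with rfl | rfl <;> rcases hb' with rfl | rfl <;>
    rcases hc' with rfl | rfl <;> rcases hd' with rfl | rfl <;> norm_num

lemma aux_prime_succ (d : ℕ) (h : d ∣ 1806) (hp : Nat.Prime (d + 1)) :
    d + 1 = 2 ∨ d + 1 = 3 ∨ d + 1 = 7 ∨ d + 1 = 43 := by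
  rcases aux_div1806 d h with rfl|rfl|rfl|rfl|rfl|rfl|rfl|rfl|rfl|rfl|rfl|rfl|rfl|rfl|rfl|rfl <;>
    (revert hp; norm_num)

/-- Lemma on sets of squarefree positive integers `𝒩` such that `p - 1 ∣ ν`
for every `ν ∈ 𝒩` and every prime divisor `p` of `ν`. -/
theorem stmt_2 (N : Set ℕ) (hpos : ∀ ν ∈ N, 0 < ν)
    (h1 : ∀ ν ∈ N, Squarefree ν)
    (h2 : ∀ ν ∈ N, ∀ p : ℕ, Nat.Prime p → p ∣ ν → (p - 1) ∣ ν) :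
    N ⊆ {1, 2, 6, 42, 1806} := by
  intro ν hν
  have hν0 : ν ≠ 0 := (hpos ν hν).ne'
  have hsfν : Squarefree ν := h1 ν hν
  -- every prime factor of ν is 2, 3, 7 or 43
  have hP : ∀ p, Nat.Prime p → p ∣ ν → p = 2 ∨ p = 3 ∨ p = 7 ∨ p = 43 := by
    intro p
    induction p using Nat.strong_induction_on with
    | _ p IH =>
      intro hp hpν
      have hd : (p - 1) ∣ ν := h2 ν hν p hp hpν
      have hd0 : p - 1 ≠ 0 := by have := hp.two_le; omega
      have hsf : Squarefree (p - 1) := hsfν.squarefree_of_dvd hd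
      have h1806 : (p - 1) ∣ 1806 := by
        apply aux_dvd1806 _ hd0 hsf
        intro q hq hqd
        have hqν : q ∣ ν := hqd.trans hd
        have hqlt : q < p := by
          have := Nat.le_of_dvd (by omega) hqd
          omega
        exact IH q hqlt hq hqν
      have := aux_prime_succ (p - 1) h1806
        (by have e : p - 1 + 1 = p := by omega
            rw [e]; exact hp)
      have hp2 := hp.two_le
      omega
  have hdvd : ν ∣ 1806 := aux_dvd1806 ν hν0 hsfν hP
  rcases aux_div1806 ν hdvd with rfl|rfl|rfl|rfl|rfl|rfl|rfl|rfl|rfl|rfl|rfl|rfl|rfl|rfl|rfl|rfl <;>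
    [skip; skip; exact absurd (h2 _ hν 3 (by norm_num) (by norm_num)) (by norm_num);
     skip; exact absurd (h2 _ hν 7 (by norm_num) (by norm_num)) (by norm_num);
     exact absurd (h2 _ hν 7 (by norm_num) (by norm_num)) (by norm_num);
     exact absurd (h2 _ hν 3 (by norm_num) (by norm_num)) (by norm_num);
     skip; exact absurd (h2 _ hν 43 (by norm_num) (by norm_num)) (by norm_num);
     exact absurd (h2 _ hν 43 (by norm_num) (by norm_num)) (by norm_num);
     exact absurd (h2 _ hν 3 (by norm_num) (by norm_num)) (by norm_num);
     exact absurd (h2 _ hν 43 (by norm_num) (by norm_num)) (by norm_num);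
     exact absurd (h2 _ hν 7 (by norm_num) (by norm_num)) (by norm_num);
     exact absurd (h2 _ hν 7 (by norm_num) (by norm_num)) (by norm_num);
     exact absurd (h2 _ hν 3 (by norm_num) (by norm_num)) (by norm_num);
     skip] <;>
  simp [Set.mem_insert_iff]
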